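/- (Remark on nominal conditions.) In the setting of the observer part of Theorem 1, assume additionally that the measurement noise vanishes identically, n ≡ 0. Then for every p ≥ 2, α > 1, and Ψ > 0 there exists a constant C > 0, independent of ω₁, such that for every first-level bandwidth ω₁ ≥ 1 and every solution (e, F*, μ, ξ₁, …, ξ_p) of the cascade observer equations with |(F*)'(t)| ≤ Ψ for all t ≥ t₀: limsup_{t→∞} ‖z(t) − ξ_p(t) − b·(bᵀ∑_{j=1}^{p−1} ξ_j(t))‖ ≤ C/ω₁. In particular, the asymptotic observation error bound can be made arbitrarily small by increasing ω₁. -/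

import Mathlib

open Matrix Filter

noncomputable section

set_option maxHeartbeats 1000000

noncomputable section

/-- Eventual bound: `|f t| ≤ c + ε` eventually, for every `ε > 0`. -/
def EvB (f : ℝ → ℝ) (c : ℝ) : Prop := ∀ ε : ℝ, 0 < ε → ∀ᶠ t in atTop, |f t| ≤ c + ε

namespace EvB

lemma mono {f : ℝ → ℝ} {c d : ℝ} (h : EvB f c) (hcd : c ≤ d) : EvB f d := by
  intro ε hε
  exact (h ε hε).mono fun t ht => ht.trans (by linarith)

lemma of_forall {f : ℝ → ℝ} {c T : ℝ} (h : ∀ t, T ≤ t → |f t| ≤ c) : EvB f c := by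
  intro ε hε
  filter_upwards [eventually_ge_atTop T] with t ht
  exact (h t ht).trans (by linarith)

lemma congr {f g : ℝ → ℝ} {c : ℝ} (h : EvB f c) (hfg : ∀ t, g t = f t) : EvB g c := by
  intro ε hε; exact (h ε hε).mono fun t ht => by rw [hfg]; exact ht

lemma zero : EvB (fun _ => (0:ℝ)) 0 := of_forall (T := 0) (fun t _ => by simp)

lemma add {f g : ℝ → ℝ} {a b : ℝ} (hf : EvB f a) (hg : EvB g b) :
    EvB (fun t => f t + g t) (a + b) := by
  intro ε hε
  filter_upwards [hf (ε/2) (by linarith), hg (ε/2) (by linarith)] with t h1 h2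
  calc |f t + g t| ≤ |f t| + |g t| := abs_add_le _ _
    _ ≤ (a + ε/2) + (b + ε/2) := add_le_add h1 h2
    _ = a + b + ε := by ring

lemma sub {f g : ℝ → ℝ} {a b : ℝ} (hf : EvB f a) (hg : EvB g b) :
    EvB (fun t => f t - g t) (a + b) := by
  have : EvB (fun t => -g t) b := fun ε hε => (hg ε hε).mono fun t ht => by
    rwa [abs_neg]
  exact (hf.add this).congr fun t => by ring

lemma const_mul {f : ℝ → ℝ} {a : ℝ} (k : ℝ) (hk : 0 ≤ k) (hf : EvB f a) :
    EvB (fun t => k * f t) (k * a) := by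
  intro ε hε
  have hε' : 0 < ε / (k + 1) := by positivity
  filter_upwards [hf _ hε'] with t ht
  have : |k * f t| = k * |f t| := by rw [abs_mul, abs_of_nonneg hk]
  rw [this]
  have h1 : k * |f t| ≤ k * (a + ε / (k+1)) := by
    exact mul_le_mul_of_nonneg_left ht hk
  have h2 : k * (ε / (k+1)) ≤ ε := by
    rw [mul_div_assoc']
    rw [div_le_iff₀ (by linarith)]
    nlinarith
  nlinarith

end EvB

/-- Explicit decay bound for `y' = -λ y + g` with `|g| ≤ M` on `[t₁, ∞)`. -/
lemma decay_bound {lam : ℝ} (hlam : 0 < lam) {y g : ℝ → ℝ} {t₁ M : ℝ}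
    (hy : ∀ t, t₁ ≤ t → HasDerivAt y (-(lam * y t) + g t) t)
    (hg : ∀ t, t₁ ≤ t → |g t| ≤ M) :
    ∀ t, t₁ ≤ t → |y t| ≤ M / lam + (|y t₁| + M / lam) * Real.exp (-(lam * (t - t₁))) := by
  have hM : 0 ≤ M := le_trans (abs_nonneg _) (hg t₁ le_rfl)
  set u : ℝ → ℝ := fun t => Real.exp (lam * t) * y t with hu
  have hE : ∀ s : ℝ, HasDerivAt (fun r => Real.exp (lam * r)) (lam * Real.exp (lam * s)) s := by
    intro s
    have := ((hasDerivAt_id s).const_mul lam).exp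
    simpa [mul_comm] using this
  have hud : ∀ t, t₁ ≤ t → HasDerivAt u (Real.exp (lam * t) * g t) t := by
    intro t ht
    have := (hE t).mul (hy t ht)
    refine this.congr_deriv ?_
    ring
  -- upper bound for u via monotonicity of φ := (M/lam) e^{lam t} - u
  have key : ∀ (sgn : ℝ), sgn = 1 ∨ sgn = -1 →
      ∀ t, t₁ ≤ t → sgn * u t ≤ sgn * u t₁ + (M / lam) * (Real.exp (lam * t) - Real.exp (lam * t₁)) := by
    intro sgn hsgn t ht
    set φ : ℝ → ℝ := fun s => (M / lam) * Real.exp (lam * s) - sgn * u s with hφ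
    have hφd : ∀ s, t₁ ≤ s → HasDerivAt φ (Real.exp (lam * s) * (M - sgn * g s)) s := by
      intro s hs
      have h1 : HasDerivAt (fun r => (M / lam) * Real.exp (lam * r))
          ((M / lam) * (lam * Real.exp (lam * s))) s := (hE s).const_mul (M / lam)
      have := h1.sub ((hud s hs).const_mul sgn)
      refine this.congr_deriv ?_
      field_simp
    have hmono : MonotoneOn φ (Set.Ici t₁) := by
      apply monotoneOn_of_deriv_nonneg (convex_Ici t₁)
      · intro s hs
        exact (hφd s hs).continuousAt.continuousWithinAt
      · intro s hs
        rw [interior_Ici] at hs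
        exact (hφd s (le_of_lt hs)).differentiableAt.differentiableWithinAt
      · intro s hs
        rw [interior_Ici] at hs
        rw [(hφd s (le_of_lt hs)).deriv]
        have : sgn * g s ≤ M := by
          rcases hsgn with h | h <;> rw [h] <;>
            [skip; rw [neg_one_mul]] <;>
            · have := (abs_le.mp (hg s (le_of_lt hs)))
              first | linarith [this.1, this.2] | linarith [this.1, this.2]
        exact mul_nonneg (Real.exp_pos _).le (by linarith)
    have := hmono (Set.self_mem_Ici) (Set.mem_Ici.mpr ht) ht
    simp only [hφ] at this
    linarith
  intro t ht
  have hup := key 1 (Or.inl rfl) t ht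
  have hdn := key (-1) (Or.inr rfl) t ht
  simp only [one_mul, neg_one_mul, neg_le] at hup hdn
  -- u t ≤ u t₁ + (M/lam)(e^{lam t} - e^{lam t₁})  and  -u t ≤ -u t₁ + same
  have hexp : (0:ℝ) < Real.exp (lam * t) := Real.exp_pos _
  have hexp1 : (0:ℝ) < Real.exp (lam * t₁) := Real.exp_pos _
  have habs : |u t| ≤ |u t₁| + (M / lam) * (Real.exp (lam * t) - Real.exp (lam * t₁)) := by
    rw [abs_le]
    constructor
    · have := neg_le.mpr hdn
      have h1 : -(u t₁) ≤ |u t₁| := neg_le_abs _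
      nlinarith [le_abs_self (u t₁), neg_abs_le (u t₁), div_nonneg hM hlam.le,
        Real.exp_le_exp.mpr (mul_le_mul_of_nonneg_left ht hlam.le)]
    · nlinarith [le_abs_self (u t₁), div_nonneg hM hlam.le]
  -- translate to y
  have hy_eq : y t = u t / Real.exp (lam * t) := by
    field_simp [hu]
    simp only [hu]; ring
  have hy1_eq : |u t₁| = Real.exp (lam * t₁) * |y t₁| := by
    rw [hu]; rw [abs_mul, abs_of_pos hexp1]
  rw [hy_eq, abs_div, abs_of_pos hexp, div_le_iff₀ hexp]
  have hexp_le : Real.exp (lam * t₁) ≤ Real.exp (lam * t) :=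
    Real.exp_le_exp.mpr (mul_le_mul_of_nonneg_left ht hlam.le)
  have hrw : Real.exp (-(lam * (t - t₁))) * Real.exp (lam * t) = Real.exp (lam * t₁) := by
    rw [← Real.exp_add]; ring_nf
  calc |u t| ≤ |u t₁| + (M / lam) * (Real.exp (lam * t) - Real.exp (lam * t₁)) := habs
    _ ≤ Real.exp (lam * t₁) * |y t₁| + (M / lam) * Real.exp (lam * t) := by
        rw [hy1_eq]; nlinarith [div_nonneg hM hlam.le]
    _ ≤ (M / lam + (|y t₁| + M / lam) * Real.exp (-(lam * (t - t₁)))) * Real.exp (lam * t) := by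
        have h2 : (|y t₁| + M / lam) * Real.exp (-(lam * (t - t₁))) * Real.exp (lam * t)
            = (|y t₁| + M / lam) * Real.exp (lam * t₁) := by
          rw [mul_assoc, hrw]
        nlinarith [div_nonneg hM hlam.le, abs_nonneg (y t₁), hexp1.le,
          mul_nonneg (div_nonneg hM hlam.le) hexp1.le]

/-- Asymptotic bound for the scalar linear ODE `y' = -λ y + g`. -/
lemma EvB.ode {lam : ℝ} (hlam : 0 < lam) {y g : ℝ → ℝ} {T M : ℝ} (hM : 0 ≤ M)
    (hy : ∀ t, T ≤ t → HasDerivAt y (-(lam * y t) + g t) t)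
    (hg : EvB g M) : EvB y (M / lam) := by
  intro ε hε
  have hε' : 0 < lam * ε / 2 := by positivity
  obtain ⟨T₁, hT₁⟩ := eventually_atTop.mp (hg _ hε')
  set t₁ := max T T₁ with ht₁
  have hy' : ∀ t, t₁ ≤ t → HasDerivAt y (-(lam * y t) + g t) t :=
    fun t ht => hy t (le_trans (le_max_left _ _) ht)
  have hg' : ∀ t, t₁ ≤ t → |g t| ≤ M + lam * ε / 2 :=
    fun t ht => hT₁ t (le_trans (le_max_right _ _) ht)
  have hdecay := decay_bound hlam hy' hg'
  set K := |y t₁| + (M + lam * ε / 2) / lam with hK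
  have hK0 : 0 ≤ K := by positivity
  have htend : Tendsto (fun t => K * Real.exp (-(lam * (t - t₁)))) atTop (nhds 0) := by
    have h1 : Tendsto (fun t : ℝ => -(lam * (t - t₁))) atTop atBot := by
      apply Filter.tendsto_neg_atTop_atBot.comp
      apply Filter.tendsto_atTop_atTop_of_monotone
      · intro a b hab
        exact mul_le_mul_of_nonneg_left (by linarith) hlam.le
      · intro b
        refine ⟨b / lam + t₁, ?_⟩
        rw [mul_comm]
        rw [← sub_le_iff_le_add] at *
        calc b ≤ b / lam * lam := by rw [div_mul_cancel₀]; exact hlam.ne'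
          _ ≤ (b / lam + t₁ - t₁) * lam := by ring_nf; rfl
    have := (Real.tendsto_exp_atBot.comp h1).const_mul K
    simpa using this
  have hev : ∀ᶠ t in atTop, K * Real.exp (-(lam * (t - t₁))) < ε / 2 :=
    htend.eventually_lt_const (by linarith)
  filter_upwards [hev, eventually_ge_atTop t₁] with t h2 h3
  have := hdecay t h3
  have harith : (M + lam * ε / 2) / lam = M / lam + ε / 2 := by
    field_simp
  rw [harith] at this
  linarith

/-- One cascade level: from the error ODEs in original coordinates, deduce eventual
bounds on the Jordan-type coordinates. -/
lemma level_step {ω Qp MG t₀ : ℝ} (hω : 1 ≤ ω) (hQp : 0 ≤ Qp) (hMG : 0 ≤ MG)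
    {qf G Z1 Z2 Z3 : ℝ → ℝ}
    (h1 : ∀ t, t₀ ≤ t → HasDerivAt Z1 (Z2 t - 3*ω*(Z1 t - qf t)) t)
    (h2 : ∀ t, t₀ ≤ t → HasDerivAt Z2 (Z3 t - 3*ω^2*(Z1 t - qf t)) t)
    (h3 : ∀ t, t₀ ≤ t → HasDerivAt Z3 (G t - ω^3*(Z1 t - qf t)) t)
    (hq : EvB qf Qp) (hG : EvB G MG) :
    EvB Z1 (7*Qp + MG/ω^3) ∧ EvB (fun t => Z2 t/ω - 2*Z1 t) (4*Qp + MG/ω^3) ∧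
      EvB (fun t => Z3 t/ω^2 - Z2 t/ω + Z1 t) (Qp + MG/ω^3) := by
  have hω0 : 0 < ω := lt_of_lt_of_le one_pos hω
  set w3 : ℝ → ℝ := fun t => Z3 t/ω^2 - Z2 t/ω + Z1 t with hw3
  set w2 : ℝ → ℝ := fun t => Z2 t/ω - 2*Z1 t with hw2
  -- ODE for w3
  have hw3d : ∀ t, t₀ ≤ t → HasDerivAt w3 (-(ω * w3 t) + (ω * qf t + G t / ω^2)) t := by
    intro t ht
    have := (((h3 t ht).div_const (ω^2)).sub ((h2 t ht).div_const ω)).add (h1 t ht)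
    refine this.congr_deriv ?_
    try simp only [hw3, hw2]
    field_simp [hω0.ne']
    ring
  have hg3 : EvB (fun t => ω * qf t + G t / ω^2) (ω * Qp + MG / ω^2) := by
    have h1 := hq.const_mul ω hω0.le
    have h2 : EvB (fun t => (ω^2)⁻¹ * G t) ((ω^2)⁻¹ * MG) :=
      hG.const_mul _ (by positivity)
    have := h1.add h2
    refine (this.congr fun t => by rw [div_eq_inv_mul]).mono (by rw [div_eq_inv_mul])
  have hb3 : EvB w3 (Qp + MG/ω^3) := by
    have := EvB.ode hω0 (by positivity) hw3d hg3
    refine this.mono ?_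
    rw [div_le_iff₀ hω0] at *
    have : (Qp + MG / ω ^ 3) * ω = Qp * ω + MG / ω^2 := by
      field_simp
    rw [this]
    nlinarith [div_nonneg hMG (by positivity : (0:ℝ) ≤ ω^2)]
  -- ODE for w2
  have hw2d : ∀ t, t₀ ≤ t → HasDerivAt w2 (-(ω * w2 t) + (ω * w3 t - 3 * ω * qf t)) t := by
    intro t ht
    have := ((h2 t ht).div_const ω).sub ((h1 t ht).const_mul 2)
    refine this.congr_deriv ?_
    try simp only [hw3, hw2]
    field_simp [hω0.ne']
    ring
  have hg2 : EvB (fun t => ω * w3 t - 3 * ω * qf t) (ω * (Qp + MG/ω^3) + 3 * ω * Qp) := by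
    have ha := hb3.const_mul ω hω0.le
    have hb := hq.const_mul (3 * ω) (by positivity)
    exact (ha.sub hb).congr fun t => by ring
  have hb2 : EvB w2 (4*Qp + MG/ω^3) := by
    have := EvB.ode hω0 (by positivity) hw2d hg2
    refine this.mono (le_of_eq ?_)
    try simp only [hw3, hw2]
    field_simp [hω0.ne']
    ring
  -- ODE for w1 = Z1
  have hw1d : ∀ t, t₀ ≤ t → HasDerivAt Z1 (-(ω * Z1 t) + (ω * w2 t + 3 * ω * qf t)) t := by
    intro t ht
    convert h1 t ht using 1
    simp only [hw2]
    field_simp [hω0.ne']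
    ring
  have hg1 : EvB (fun t => ω * w2 t + 3 * ω * qf t) (ω * (4*Qp + MG/ω^3) + 3 * ω * Qp) := by
    exact (hb2.const_mul ω hω0.le).add (hq.const_mul (3*ω) (by positivity))
  have hb1 : EvB Z1 (7*Qp + MG/ω^3) := by
    have := EvB.ode hω0 (by positivity) hw1d hg1
    refine this.mono (le_of_eq ?_)
    try simp only [hw3, hw2]
    field_simp [hω0.ne']
    ring
  exact ⟨hb1, hb2, hb3⟩

/-- Recursive constants of the cascade: `cseq α i = (qᵢ, qᵢ₋₁, sᵢ)`. -/
def cseq (α : ℝ) : ℕ → ℝ × ℝ × ℝ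
  | 0 => (0, 0, 0)
  | 1 => (1, 0, 0)
  | (n+2) =>
      let c := cseq α (n+1)
      let s' := c.2.2 + α ^ (3*n) * (c.1 + c.2.1)
      (7 * c.1 + 1 + s', c.1, s')

lemma cseq_nonneg {α : ℝ} (hα : 0 ≤ α) :
    ∀ n, 0 ≤ (cseq α n).1 ∧ 0 ≤ (cseq α n).2.1 ∧ 0 ≤ (cseq α n).2.2 := by
  intro n
  induction n using Nat.strong_induction_on with
  | _ n ih =>
    match n with
    | 0 => refine ⟨le_rfl, le_rfl, le_rfl⟩
    | 1 => exact ⟨zero_le_one, le_rfl, le_rfl⟩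
    | (n+2) =>
      obtain ⟨h1, h2, h3⟩ := ih (n+1) (by omega)
      have hp : (0:ℝ) ≤ α ^ (3*n) := pow_nonneg hα _
      refine ⟨?_, h1, ?_⟩ <;> simp only [cseq] <;> nlinarith

lemma cseq_succ_succ (α : ℝ) (n : ℕ) :
    cseq α (n+2) =
      (7 * (cseq α (n+1)).1 + 1 + ((cseq α (n+1)).2.2 + α ^ (3*n) * ((cseq α (n+1)).1 + (cseq α (n+1)).2.1)),
       (cseq α (n+1)).1,
       (cseq α (n+1)).2.2 + α ^ (3*n) * ((cseq α (n+1)).1 + (cseq α (n+1)).2.1)) := rfl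


/-- System matrix `A` of the extended error-domain state. -/
def Amat : Matrix (Fin 3) (Fin 3) ℝ := !![0,1,0; 0,0,1; 0,0,0]

/-- Vector `b = (0,0,1)ᵀ`. -/
def bvec : Fin 3 → ℝ := ![0,0,1]

/-- Vector `c = (1,0,0)ᵀ`. -/
def cvec : Fin 3 → ℝ := ![1,0,0]

/-- Vector `d = (0,1,0)ᵀ`. -/
def dvec : Fin 3 → ℝ := ![0,1,0]

/-- Bandwidth-parameterized observer gain `l(ω) = (3ω, 3ω², ω³)ᵀ`. -/
def gain (ω : ℝ) : Fin 3 → ℝ := ![3 * ω, 3 * ω ^ 2, ω ^ 3]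

lemma Amat_mulVec (v : Fin 3 → ℝ) : Amat.mulVec v = ![v 1, v 2, 0] := by
  funext k
  fin_cases k <;>
    simp [Amat, Matrix.mulVec, dotProduct, Fin.sum_univ_three]

lemma cvec_dot (v : Fin 3 → ℝ) : cvec ⬝ᵥ v = v 0 := by
  simp [cvec, dotProduct, Fin.sum_univ_three]

lemma bvec_dot (v : Fin 3 → ℝ) : bvec ⬝ᵥ v = v 2 := by
  simp [bvec, dotProduct, Fin.sum_univ_three]

/-- Component values of the generic observer right-hand side. -/
lemma obs_rhs_apply (v : Fin 3 → ℝ) (a b : ℝ) (ω : ℝ) :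
    (Amat.mulVec v + a • dvec + b • gain ω) 0 = v 1 + b * (3 * ω)
    ∧ (Amat.mulVec v + a • dvec + b • gain ω) 1 = v 2 + a + b * (3 * ω^2)
    ∧ (Amat.mulVec v + a • dvec + b • gain ω) 2 = b * ω^3 := by
  refine ⟨?_, ?_, ?_⟩ <;>
    simp [Amat_mulVec, dvec, gain, Pi.add_apply, Pi.smul_apply, smul_eq_mul]

lemma obs_rhs_apply' (v : Fin 3 → ℝ) (a b : ℝ) (ω : ℝ) :
    (Amat.mulVec v - a • dvec + b • gain ω) 0 = v 1 + b * (3 * ω)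
    ∧ (Amat.mulVec v - a • dvec + b • gain ω) 1 = v 2 - a + b * (3 * ω^2)
    ∧ (Amat.mulVec v - a • dvec + b • gain ω) 2 = b * ω^3 := by
  refine ⟨?_, ?_, ?_⟩ <;>
    simp [Amat_mulVec, dvec, gain, Pi.add_apply, Pi.sub_apply, Pi.smul_apply, smul_eq_mul]

/-- Remark on nominal conditions: when the measurement noise vanishes
(`n ≡ 0`), for every `p ≥ 2`, `α > 1` and disturbance-derivative bound `Ψ > 0` there is a
constant `C > 0`, independent of `ω₁`, such that for all `ω₁ ≥ 1` and all solutions of the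
cascade observer equations, `limsup_{t→∞} ‖ζ̃_p(t)‖ ≤ C/ω₁`; hence the asymptotic
observation error can be made arbitrarily small by increasing `ω₁`. -/
theorem cascade_observer_nominal_bound
    (p : ℕ) (hp : 2 ≤ p) (α : ℝ) (hα : 1 < α) (Ψ : ℝ) (hΨ : 0 < Ψ) :
    ∃ C : ℝ, 0 < C ∧
      ∀ ω₁ : ℝ, 1 ≤ ω₁ →
      ∀ (t₀ bhat : ℝ), bhat ≠ 0 →
      ∀ μ e e' e'' F F' : ℝ → ℝ,
      (∀ t : ℝ, HasDerivAt e (e' t) t) →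
      (∀ t : ℝ, HasDerivAt e' (e'' t) t) →
      (∀ t : ℝ, e'' t = F t - bhat * μ t) →
      (∀ t : ℝ, t₀ ≤ t → HasDerivAt F (F' t) t) →
      (∀ t : ℝ, t₀ ≤ t → |F' t| ≤ Ψ) →
      ∀ ξ ξ' : ℕ → ℝ → Fin 3 → ℝ,
      (∀ i : ℕ, 1 ≤ i → i ≤ p → ∀ t : ℝ, HasDerivAt (ξ i) (ξ' i t) t) →
      (∀ t : ℝ, ξ' 1 t =
        Amat.mulVec (ξ 1 t) - (bhat * μ t) • dvec
          + ((e t - cvec ⬝ᵥ ξ 1 t)) • gain (α ^ (1 - 1) * ω₁)) →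
      (∀ i : ℕ, 2 ≤ i → i ≤ p → ∀ t : ℝ, ξ' i t =
        Amat.mulVec (ξ i t)
          + (-(bhat * μ t) + bvec ⬝ᵥ ∑ j ∈ Finset.Icc 1 (i - 1), ξ j t) • dvec
          + (cvec ⬝ᵥ (ξ (i - 1) t - ξ i t)) • gain (α ^ (i - 1) * ω₁)) →
      limsup (fun t : ℝ =>
        ‖![e t, e' t, F t] - ξ p t
          - (bvec ⬝ᵥ ∑ j ∈ Finset.Icc 1 (p - 1), ξ j t) • bvec‖) atTop ≤ C / ω₁ := by
  have hα1 : (1:ℝ) ≤ α := hα.le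
  have hα0 : (0:ℝ) ≤ α := by linarith
  have hqp0 : 0 ≤ (cseq α p).1 := (cseq_nonneg hα0 p).1
  refine ⟨3 * α ^ (2*(p-1)) * ((cseq α p).1 + 1) * Ψ, ?_, ?_⟩
  · have h1 : (0:ℝ) < 3 * α ^ (2*(p-1)) := by positivity
    have h2 : (0:ℝ) < (cseq α p).1 + 1 := by linarith
    have := mul_pos (mul_pos h1 h2) hΨ
    linarith
  intro ω₁ hω₁ t₀ bhat hb μ e e' e'' F F' he he' he'' hF hF' ξ ξ' hξd hξ1 hξi
  set C : ℝ := 3 * α ^ (2*(p-1)) * ((cseq α p).1 + 1) * Ψ with hCdef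
  have hω₁0 : (0:ℝ) < ω₁ := by linarith
  -- componentwise derivative facts
  have hZ1d : ∀ i, 1 ≤ i → i ≤ p → ∀ t : ℝ,
      HasDerivAt (fun s => e s - ξ i s 0) (e' t - ξ' i t 0) t :=
    fun i h1 h2 t => (he t).sub ((hasDerivAt_pi.1 (hξd i h1 h2 t)) 0)
  have hZ2d : ∀ i, 1 ≤ i → i ≤ p → ∀ t : ℝ,
      HasDerivAt (fun s => e' s - ξ i s 1) (e'' t - ξ' i t 1) t :=
    fun i h1 h2 t => (he' t).sub ((hasDerivAt_pi.1 (hξd i h1 h2 t)) 1)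
  have hSd : ∀ m, m ≤ p → ∀ t : ℝ,
      HasDerivAt (fun s => ∑ j ∈ Finset.Icc 1 m, ξ j s 2) (∑ j ∈ Finset.Icc 1 m, ξ' j t 2) t := by
    intro m hm t
    exact HasDerivAt.fun_sum fun j hj =>
      (hasDerivAt_pi.1 (hξd j (Finset.mem_Icc.1 hj).1 (le_trans (Finset.mem_Icc.1 hj).2 hm) t)) 2
  have hZ3d : ∀ i, 1 ≤ i → i ≤ p → ∀ t : ℝ, t₀ ≤ t →
      HasDerivAt (fun s => F s - ξ i s 2 - ∑ j ∈ Finset.Icc 1 (i-1), ξ j s 2)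
        (F' t - ξ' i t 2 - ∑ j ∈ Finset.Icc 1 (i-1), ξ' j t 2) t :=
    fun i h1 h2 t ht =>
      ((hF t ht).sub ((hasDerivAt_pi.1 (hξd i h1 h2 t)) 2)).sub (hSd (i-1) (by omega) t)
  -- component values of ξ' 1
  have hx1 : ∀ t : ℝ,
      ξ' 1 t 0 = ξ 1 t 1 + (e t - ξ 1 t 0) * (3 * ω₁)
      ∧ ξ' 1 t 1 = ξ 1 t 2 - bhat * μ t + (e t - ξ 1 t 0) * (3 * ω₁^2)
      ∧ ξ' 1 t 2 = (e t - ξ 1 t 0) * ω₁^3 := by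
    intro t
    have h := hξ1 t
    have hω : α ^ (1-1) * ω₁ = ω₁ := by norm_num
    rw [hω, cvec_dot] at h
    obtain ⟨ha, hb2, hc⟩ := obs_rhs_apply' (ξ 1 t) (bhat * μ t) (e t - ξ 1 t 0) ω₁
    exact ⟨by rw [h]; exact ha, by rw [h]; exact hb2, by rw [h]; exact hc⟩
  -- main induction
  have key : ∀ n, 1 ≤ n → n ≤ p →
      EvB (fun t => e t - ξ n t 0) ((cseq α n).1 * Ψ / ω₁^3) ∧
      EvB (fun t => (e' t - ξ n t 1)/(α^(n-1)*ω₁) - 2*(e t - ξ n t 0))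
        ((cseq α n).1 * Ψ / ω₁^3) ∧
      EvB (fun t => (F t - ξ n t 2 - ∑ j ∈ Finset.Icc 1 (n-1), ξ j t 2)/(α^(n-1)*ω₁)^2
        - (e' t - ξ n t 1)/(α^(n-1)*ω₁) + (e t - ξ n t 0)) ((cseq α n).1 * Ψ / ω₁^3) ∧
      EvB (fun t => ∑ j ∈ Finset.Icc 1 n, ξ' j t 2) ((cseq α (n+1)).2.2 * Ψ) := by
    intro n hn
    induction n, hn using Nat.le_induction with
    | base =>
      intro hnp
      have hIcc0 : Finset.Icc 1 0 = (∅ : Finset ℕ) := by simp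
      have h1 : ∀ t, t₀ ≤ t → HasDerivAt (fun s => e s - ξ 1 s 0)
          ((e' t - ξ 1 t 1) - 3*ω₁*((e t - ξ 1 t 0) - (fun _ : ℝ => (0:ℝ)) t)) t := by
        intro t _
        have h := hZ1d 1 le_rfl (by omega) t
        rw [(hx1 t).1] at h
        convert h using 1
        ring
      have h2 : ∀ t, t₀ ≤ t → HasDerivAt (fun s => e' s - ξ 1 s 1)
          ((F t - ξ 1 t 2 - ∑ j ∈ Finset.Icc 1 0, ξ j t 2)
            - 3*ω₁^2*((e t - ξ 1 t 0) - (fun _ : ℝ => (0:ℝ)) t)) t := by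
        intro t _
        have h := hZ2d 1 le_rfl (by omega) t
        rw [(hx1 t).2.1, he'' t] at h
        convert h using 1
        rw [hIcc0, Finset.sum_empty]
        ring
      have h3 : ∀ t, t₀ ≤ t →
          HasDerivAt (fun s => F s - ξ 1 s 2 - ∑ j ∈ Finset.Icc 1 0, ξ j s 2)
          (F' t - ω₁^3*((e t - ξ 1 t 0) - (fun _ : ℝ => (0:ℝ)) t)) t := by
        intro t ht
        have h := hZ3d 1 le_rfl (by omega) t ht
        rw [(hx1 t).2.2, hIcc0, Finset.sum_empty] at h
        convert h using 1
        · funext s; simp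
        · simp; ring
      have hls := level_step (ω := ω₁) (Qp := 0) (MG := Ψ) (t₀ := t₀) hω₁ le_rfl hΨ.le
        h1 h2 h3 EvB.zero (EvB.of_forall hF')
      obtain ⟨hb1, hb2, hb3⟩ := hls
      have hc1 : (7*0 + Ψ/ω₁^3 : ℝ) ≤ (cseq α 1).1 * Ψ / ω₁^3 := by
        simp [cseq]
      have hc2 : (4*0 + Ψ/ω₁^3 : ℝ) ≤ (cseq α 1).1 * Ψ / ω₁^3 := by
        simp [cseq]
      have hc3 : (0 + Ψ/ω₁^3 : ℝ) ≤ (cseq α 1).1 * Ψ / ω₁^3 := by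
        simp [cseq]
      have hωeq : α^(1-1) * ω₁ = ω₁ := by norm_num
      refine ⟨hb1.mono hc1, ?_, ?_, ?_⟩
      · exact ((hb2.congr fun t => by rw [hωeq]).mono hc2)
      · exact ((hb3.congr fun t => by rw [hωeq]).mono hc3)
      · refine EvB.mono (EvB.congr (hb1.const_mul (ω₁^3) (by positivity)) (fun t => ?_)) ?_
        · rw [Finset.Icc_self, Finset.sum_singleton, (hx1 t).2.2]
          ring
        have hs2 : (cseq α 2).2.2 = 1 := by
          show (0:ℝ) + α ^ (3*0) * (1 + 0) = 1
          norm_num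
        rw [hs2]
        have : ω₁ ^ 3 * (7 * 0 + Ψ / ω₁ ^ 3) = Ψ := by
          field_simp
          ring
        rw [this]
        linarith
    | succ n hn ih =>
      intro hnp
      have hnp' : n ≤ p := by omega
      obtain ⟨ihZ1, ihW2, ihW3, ihS⟩ := ih hnp'
      obtain ⟨m, rfl⟩ : ∃ m, n = m + 1 := ⟨n - 1, by omega⟩
      simp only [Nat.add_sub_cancel]
      set ω : ℝ := α^(m+1) * ω₁ with hωdef
      have hαpow : (1:ℝ) ≤ α^(m+1) := one_le_pow₀ hα1
      have hω1 : (1:ℝ) ≤ ω := by rw [hωdef]; nlinarith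
      have hω0 : (0:ℝ) < ω := by linarith
      -- abbreviations for cseq values
    
      have hq : (cseq α (m+2)).1 = 7*(cseq α (m+1)).1 + 1
          + ((cseq α (m+1)).2.2 + α^(3*m) * ((cseq α (m+1)).1 + (cseq α (m+1)).2.1)) := by
        rw [cseq_succ_succ]
      have hqprev : (cseq α (m+2)).2.1 = (cseq α (m+1)).1 := by rw [cseq_succ_succ]
      have hs : (cseq α (m+2)).2.2 = (cseq α (m+1)).2.2
          + α^(3*m) * ((cseq α (m+1)).1 + (cseq α (m+1)).2.1) := by rw [cseq_succ_succ]
      have hs3 : (cseq α (m+3)).2.2 = (cseq α (m+2)).2.2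
          + α^(3*(m+1)) * ((cseq α (m+2)).1 + (cseq α (m+2)).2.1) := by
        rw [show m+3 = (m+1)+2 from rfl, cseq_succ_succ]
      obtain ⟨hqm0, hqmm0, hsm0⟩ := cseq_nonneg hα0 (m+1)
      obtain ⟨hqm20, hqmm20, hsm20⟩ := cseq_nonneg hα0 (m+2)
      -- component values of ξ' (m+2)
      have hx : ∀ t : ℝ,
          ξ' (m+1+1) t 0 = ξ (m+1+1) t 1 + (ξ (m+1) t 0 - ξ (m+1+1) t 0) * (3 * ω)
          ∧ ξ' (m+1+1) t 1 = ξ (m+1+1) t 2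
              + (-(bhat * μ t) + ∑ j ∈ Finset.Icc 1 (m+1), ξ j t 2)
              + (ξ (m+1) t 0 - ξ (m+1+1) t 0) * (3 * ω^2)
          ∧ ξ' (m+1+1) t 2 = (ξ (m+1) t 0 - ξ (m+1+1) t 0) * ω^3 := by
        intro t
        have h := hξi (m+1+1) (by omega) hnp t
        simp only [Nat.add_sub_cancel] at h
        rw [bvec_dot, cvec_dot, Finset.sum_apply, ← hωdef] at h
        obtain ⟨ha, hb2, hc⟩ := obs_rhs_apply (ξ (m+1+1) t)
          (-(bhat * μ t) + ∑ j ∈ Finset.Icc 1 (m+1), ξ j t 2)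
          ((ξ (m+1) t - ξ (m+1+1) t) 0) ω
        refine ⟨?_, ?_, ?_⟩
        · rw [h, ha]; simp [Pi.sub_apply]
        · rw [h, hb2]; simp [Pi.sub_apply]
        · rw [h, hc]; simp [Pi.sub_apply]
      -- driving term bound
      have hG : EvB (fun t => F' t - ∑ j ∈ Finset.Icc 1 (m+1), ξ' j t 2)
          ((1 + (cseq α (m+2)).2.2) * Ψ) := by
        have := (EvB.of_forall hF').sub ihS
        exact this.mono (le_of_eq (by ring))
      -- the three error ODEs for level m+2
      have h1 : ∀ t, t₀ ≤ t → HasDerivAt (fun s => e s - ξ (m+1+1) s 0)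
          ((e' t - ξ (m+1+1) t 1)
            - 3*ω*((e t - ξ (m+1+1) t 0) - (fun s => e s - ξ (m+1) s 0) t)) t := by
        intro t _
        have h := hZ1d (m+1+1) (by omega) hnp t
        rw [(hx t).1] at h
        convert h using 1
        ring
      have h2 : ∀ t, t₀ ≤ t → HasDerivAt (fun s => e' s - ξ (m+1+1) s 1)
          ((F t - ξ (m+1+1) t 2 - ∑ j ∈ Finset.Icc 1 (m+1), ξ j t 2)
            - 3*ω^2*((e t - ξ (m+1+1) t 0) - (fun s => e s - ξ (m+1) s 0) t)) t := by
        intro t _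
        have h := hZ2d (m+1+1) (by omega) hnp t
        rw [(hx t).2.1, he'' t] at h
        convert h using 1
        ring
      have h3 : ∀ t, t₀ ≤ t →
          HasDerivAt (fun s => F s - ξ (m+1+1) s 2 - ∑ j ∈ Finset.Icc 1 (m+1), ξ j s 2)
          ((fun t => F' t - ∑ j ∈ Finset.Icc 1 (m+1), ξ' j t 2) t
            - ω^3*((e t - ξ (m+1+1) t 0) - (fun s => e s - ξ (m+1) s 0) t)) t := by
        intro t ht
        have h := hZ3d (m+1+1) (by omega) hnp t ht
        simp only [Nat.add_sub_cancel] at h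
        rw [(hx t).2.2] at h
        convert h using 1
        ring
      have hQp0 : 0 ≤ (cseq α (m+1)).1 * Ψ / ω₁^3 :=
        div_nonneg (mul_nonneg hqm0 hΨ.le) (by positivity)
      have hMG0 : 0 ≤ (1 + (cseq α (m+2)).2.2) * Ψ := by nlinarith
      obtain ⟨hb1, hb2, hb3⟩ := level_step hω1 hQp0 hMG0 h1 h2 h3 ihZ1 hG
      -- constant bookkeeping
      have hω3 : ω₁^3 ≤ ω^3 := by
        apply pow_le_pow_left₀ hω₁0.le
        rw [hωdef]; nlinarith
      have hdivle : ((1 + (cseq α (m+2)).2.2) * Ψ)/ω^3 ≤ ((1 + (cseq α (m+2)).2.2) * Ψ)/ω₁^3 :=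
        div_le_div_of_nonneg_left hMG0 (by positivity) hω3
      have heq : (cseq α (m+2)).1 * Ψ / ω₁^3
          = 7*((cseq α (m+1)).1 * Ψ / ω₁^3) + ((1 + (cseq α (m+2)).2.2) * Ψ)/ω₁^3 := by
        rw [hq, hs]
        field_simp
        ring
      have hkey : 7*((cseq α (m+1)).1 * Ψ / ω₁^3) + ((1 + (cseq α (m+2)).2.2) * Ψ)/ω^3
          ≤ (cseq α (m+2)).1 * Ψ / ω₁^3 := by
        rw [heq]; linarith
      have hkey2 : 4*((cseq α (m+1)).1 * Ψ / ω₁^3) + ((1 + (cseq α (m+2)).2.2) * Ψ)/ω^3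
          ≤ (cseq α (m+2)).1 * Ψ / ω₁^3 := by linarith
      have hkey3 : ((cseq α (m+1)).1 * Ψ / ω₁^3) + ((1 + (cseq α (m+2)).2.2) * Ψ)/ω^3
          ≤ (cseq α (m+2)).1 * Ψ / ω₁^3 := by linarith
      refine ⟨hb1.mono hkey, hb2.mono hkey2, hb3.mono hkey3, ?_⟩
      -- the new bound on the derivative of the cumulative sum
      have hpow : ω^3 = α^(3*(m+1)) * ω₁^3 := by
        rw [hωdef, mul_pow, ← pow_mul, Nat.mul_comm]
      have hA := ((hb1.mono hkey).const_mul (ω^3) (by positivity))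
      have hB := (ihZ1.const_mul (ω^3) (by positivity))
      have hsum := ihS.add (hA.sub hB)
      refine EvB.mono (EvB.congr hsum (fun t => ?_)) ?_
      · rw [show m+1+1 = m+2 from rfl, Finset.sum_Icc_succ_top (by omega : 1 ≤ m+2)]
        rw [show (m+2:ℕ) = m+1+1 from rfl, (hx t).2.2]
        ring
      · refine le_of_eq ?_
        rw [hs3, hqprev, hpow]
        field_simp
  obtain ⟨kZ1, kW2, kW3, -⟩ := key p (by omega) le_rfl
  set f : ℝ → ℝ := fun t => ‖![e t, e' t, F t] - ξ p t
      - (bvec ⬝ᵥ ∑ j ∈ Finset.Icc 1 (p-1), ξ j t) • bvec‖ with hfdef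
  set ω : ℝ := α^(p-1) * ω₁ with hωdef
  set Q : ℝ := (cseq α p).1 * Ψ / ω₁^3 with hQdef
  have hαpow : (1:ℝ) ≤ α^(p-1) := one_le_pow₀ hα1
  have hω1 : (1:ℝ) ≤ ω := by rw [hωdef]; nlinarith
  have hω0 : (0:ℝ) < ω := by linarith
  have hQ0 : 0 ≤ Q := div_nonneg (mul_nonneg hqp0 hΨ.le) (by positivity)
  have hC0 : (0:ℝ) < C := by
    have h1 : (0:ℝ) < 3 * α ^ (2*(p-1)) := by positivity
    have h2 : (0:ℝ) < (cseq α p).1 + 1 := by linarith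
    have := mul_pos (mul_pos h1 h2) hΨ
    rw [hCdef]; linarith
  -- the main constant comparison
  have hQ3 : 3*ω^2*Q ≤ C/ω₁ := by
    have hpow2 : ω^2 = α^(2*(p-1)) * ω₁^2 := by
      rw [hωdef, mul_pow, ← pow_mul, Nat.mul_comm]
    have heq : 3*ω^2*Q = 3 * α^(2*(p-1)) * (cseq α p).1 * Ψ / ω₁ := by
      rw [hpow2, hQdef]
      field_simp
    rw [heq, hCdef, div_le_div_iff₀ hω₁0 hω₁0]
    have h0 : (0:ℝ) ≤ α ^ (2*(p-1)) := by positivity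
    nlinarith
  have hQC : Q ≤ C/ω₁ := by
    have h1 : Q ≤ 3*ω^2*Q := by nlinarith [mul_nonneg hQ0 (by nlinarith : (0:ℝ) ≤ 3*ω^2 - 1)]
    linarith
  have hQ2 : 3*ω*Q ≤ C/ω₁ := by
    have h1 : 3*ω*Q ≤ 3*ω^2*Q := by
      nlinarith [mul_nonneg (mul_nonneg hQ0 hω0.le) (by linarith : (0:ℝ) ≤ ω - 1)]
    linarith
  -- eventual bound on f
  have hev : ∀ ε : ℝ, 0 < ε → ∀ᶠ t in atTop, f t ≤ C/ω₁ + ε := by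
    intro ε hε
    have hden : (0:ℝ) < 3*ω^2 + 3*ω + 3 := by positivity
    have hε1 : 0 < ε / (3*ω^2 + 3*ω + 3) := by positivity
    set ε₁ : ℝ := ε / (3*ω^2 + 3*ω + 3) with hε₁def
    have hε₁ε : (3*ω^2 + 3*ω + 3) * ε₁ = ε := by
      rw [hε₁def]; field_simp
    filter_upwards [kZ1 _ hε1, kW2 _ hε1, kW3 _ hε1] with t hZ1t hW2t hW3t
    have hb : |e' t - ξ p t 1| ≤ ω*(3*Q + 3*ε₁) := by
      have h1 : |(e' t - ξ p t 1)/ω| ≤ 3*Q + 3*ε₁ := by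
        have htri := abs_add_le ((e' t - ξ p t 1)/ω - 2*(e t - ξ p t 0)) (2*(e t - ξ p t 0))
        rw [sub_add_cancel] at htri
        have h2 : |2*(e t - ξ p t 0)| = 2 * |e t - ξ p t 0| := by
          rw [abs_mul, abs_two]
        linarith [htri, h2.le, h2.ge]
      rw [abs_div, abs_of_pos hω0, div_le_iff₀ hω0] at h1
      linarith [h1]
    have hc : |F t - ξ p t 2 - ∑ j ∈ Finset.Icc 1 (p-1), ξ j t 2| ≤ ω^2*(3*Q + 3*ε₁) := by
      have h1 : |(F t - ξ p t 2 - ∑ j ∈ Finset.Icc 1 (p-1), ξ j t 2)/ω^2| ≤ 3*Q + 3*ε₁ := by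
        have htri := abs_add_le
          ((F t - ξ p t 2 - ∑ j ∈ Finset.Icc 1 (p-1), ξ j t 2)/ω^2
            - (e' t - ξ p t 1)/ω + (e t - ξ p t 0))
          ((e' t - ξ p t 1)/ω - 2*(e t - ξ p t 0))
        have htri2 := abs_add_le
          ((F t - ξ p t 2 - ∑ j ∈ Finset.Icc 1 (p-1), ξ j t 2)/ω^2 - (e t - ξ p t 0))
          (e t - ξ p t 0)
        have hre : (F t - ξ p t 2 - ∑ j ∈ Finset.Icc 1 (p-1), ξ j t 2)/ω^2
            - (e' t - ξ p t 1)/ω + (e t - ξ p t 0)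
            + ((e' t - ξ p t 1)/ω - 2*(e t - ξ p t 0))
            = (F t - ξ p t 2 - ∑ j ∈ Finset.Icc 1 (p-1), ξ j t 2)/ω^2
              - (e t - ξ p t 0) := by ring
        rw [hre] at htri
        rw [sub_add_cancel] at htri2
        linarith
      rw [abs_div, abs_of_pos (by positivity : (0:ℝ) < ω^2), div_le_iff₀ (by positivity)] at h1
      linarith [h1]
    have hfle : f t ≤ C/ω₁ + ε := by
      rw [hfdef]
      have hr0 : (0:ℝ) ≤ C/ω₁ + ε := by positivity
      rw [pi_norm_le_iff_of_nonneg hr0]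
      intro k
      have hbv : bvec ⬝ᵥ ∑ j ∈ Finset.Icc 1 (p-1), ξ j t
          = ∑ j ∈ Finset.Icc 1 (p-1), ξ j t 2 := by
        rw [bvec_dot, Finset.sum_apply]
      fin_cases k
      · show |e t - ξ p t 0 - (bvec ⬝ᵥ ∑ j ∈ Finset.Icc 1 (p - 1), ξ j t) * 0| ≤ C / ω₁ + ε
        rw [mul_zero, sub_zero]
        calc |e t - ξ p t 0| ≤ Q + ε₁ := hZ1t
          _ ≤ C/ω₁ + ε := by nlinarith
      · show |e' t - ξ p t 1 - (bvec ⬝ᵥ ∑ j ∈ Finset.Icc 1 (p - 1), ξ j t) * 0| ≤ C / ω₁ + ε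
        rw [mul_zero, sub_zero]
        calc |e' t - ξ p t 1| ≤ ω*(3*Q + 3*ε₁) := hb
          _ ≤ C/ω₁ + ε := by nlinarith
      · show |F t - ξ p t 2 - (bvec ⬝ᵥ ∑ j ∈ Finset.Icc 1 (p - 1), ξ j t) * 1| ≤ C / ω₁ + ε
        rw [mul_one, hbv]
        calc |F t - ξ p t 2 - ∑ j ∈ Finset.Icc 1 (p-1), ξ j t 2| ≤ ω^2*(3*Q + 3*ε₁) := hc
          _ ≤ C/ω₁ + ε := by nlinarith
    exact hfle
  -- pass to the limsup
  have hcb : IsCoboundedUnder (· ≤ ·) atTop f :=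
    IsCoboundedUnder.of_frequently_ge
      (Frequently.of_forall fun t => norm_nonneg _)
  have hls : ∀ ε : ℝ, 0 < ε → limsup f atTop ≤ C/ω₁ + ε :=
    fun ε hε => limsup_le_of_le hcb (hev ε hε)
  by_contra hcon
  push_neg at hcon
  have := hls ((limsup f atTop - C/ω₁)/2) (by linarith)
  linarith
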